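/- arXiv:2605.07173 — 2 statements merged into one kernel-verified Lean document; each statement's English description precedes it below -/
import Mathlib

section
/- Let G ∈ ℝ^{n×n} and J ∈ ℝ^{m×n} with row index sets α, β ⊆ {1,…,m} (disjoint). Define the critical cone C = {d ∈ ℝ^n : J_α d = 0, J_β d ≤ 0}. Suppose the rows {J_i : i ∈ α ∪ β} are linearly independent and ⟨d, G d⟩ > 0 for all nonzero d ∈ C. Then the only solution (d_x, d_y) ∈ ℝ^n × ℝ^{|α|+|β|} of the linear complementarity system G d_x + J_α^T [d_y]_α + J_β^T [d_y]_β = 0, J_α d_x = 0, 0 ≥ J_β d_x ⟂ [d_y]_β ≥ 0, is d_x = 0 and [d_y]_{α∪β} = 0. -/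
open Matrix


private lemma dot_sum {n q : ℕ} (v : Fin n → ℝ) (s : Finset (Fin q)) (f : Fin q → Fin n → ℝ) :
    v ⬝ᵥ (∑ i ∈ s, f i) = ∑ i ∈ s, v ⬝ᵥ f i := by
  simp only [dotProduct, Finset.sum_apply, Finset.mul_sum]
  exact Finset.sum_comm

/-- LICQ of the active rows plus positive definiteness of `G` on the critical
cone `C = {d : J_α d = 0, J_β d ≤ 0}` imply that the only solution of the linear
complementarity system
`G d_x + J_αᵀ [d_y]_α + J_βᵀ [d_y]_β = 0, J_α d_x = 0, 0 ≥ J_β d_x ⟂ [d_y]_β ≥ 0`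
is `d_x = 0`, `[d_y]_{α∪β} = 0`. -/
theorem stmt8 {n q : ℕ} (G : Matrix (Fin n) (Fin n) ℝ) (J : Matrix (Fin q) (Fin n) ℝ)
    (α β : Finset (Fin q)) (hdisj : Disjoint α β)
    (hLI : LinearIndependent ℝ (fun i : {i : Fin q // i ∈ α ∪ β} => J i.1))
    (hSOC : ∀ d : Fin n → ℝ, d ≠ 0 →
      (∀ i ∈ α, J i ⬝ᵥ d = 0) → (∀ i ∈ β, J i ⬝ᵥ d ≤ 0) → 0 < d ⬝ᵥ G.mulVec d)
    (dx : Fin n → ℝ) (dy : Fin q → ℝ)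
    (heq : G.mulVec dx + ((∑ i ∈ α, dy i • J i) + ∑ i ∈ β, dy i • J i) = 0)
    (hkerα : ∀ i ∈ α, J i ⬝ᵥ dx = 0)
    (hβ1 : ∀ i ∈ β, J i ⬝ᵥ dx ≤ 0)
    (hβ2 : ∀ i ∈ β, 0 ≤ dy i)
    (hcomp : ∑ i ∈ β, (J i ⬝ᵥ dx) * dy i = 0) :
    dx = 0 ∧ ∀ i ∈ α ∪ β, dy i = 0 := by
  -- Dot the stationarity equation with dx.
  have hdot : dx ⬝ᵥ (G.mulVec dx + ((∑ i ∈ α, dy i • J i) + ∑ i ∈ β, dy i • J i)) = 0 := by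
    rw [heq, dotProduct_zero]
  have hα0 : dx ⬝ᵥ (∑ i ∈ α, dy i • J i) = 0 := by
    rw [dot_sum]
    refine Finset.sum_eq_zero fun i hi => ?_
    rw [dotProduct_smul, dotProduct_comm, hkerα i hi, smul_zero]
  have hβ0 : dx ⬝ᵥ (∑ i ∈ β, dy i • J i) = 0 := by
    rw [dot_sum]
    rw [← hcomp]
    refine Finset.sum_congr rfl fun i hi => ?_
    rw [dotProduct_smul, dotProduct_comm]
    simp [mul_comm]
  have hquad : dx ⬝ᵥ G.mulVec dx = 0 := by
    have := hdot
    rw [dotProduct_add, dotProduct_add, hα0, hβ0] at this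
    linarith
  have hdx : dx = 0 := by
    by_contra hne
    exact absurd hquad (ne_of_gt (hSOC dx hne hkerα hβ1))
  subst hdx
  refine ⟨rfl, ?_⟩
  -- Now the sum of multipliers times rows is zero.
  have hsum : ∑ i ∈ α ∪ β, dy i • J i = 0 := by
    have h0 : G.mulVec (0 : Fin n → ℝ) = 0 := by simp
    rw [h0, zero_add] at heq
    rw [Finset.sum_union hdisj]
    exact heq
  -- Use linear independence.
  have hattach : ∑ i : {i : Fin q // i ∈ α ∪ β}, dy i.1 • J i.1 = 0 := by
    rw [← hsum]
    exact Finset.sum_coe_sort (α ∪ β) (fun i => dy i • J i)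
  have := Fintype.linearIndependent_iff.mp hLI (fun i => dy i.1) hattach
  intro i hi
  exact this ⟨i, hi⟩
end

section
/- Consider the shared-constraint setting: players ν = 1,…,N with Lagrangians l_ν(x,y) = θ_ν(x) + ⟨y, g(x)⟩ for a common g : ℝ^n → ℝ^m and shared multiplier y, and suppose (x̄, ȳ) satisfies the consensus KKT conditions ∇_{x^ν} l_ν(x̄, ȳ) = 0 for all ν and ȳ ∈ N_K(g(x̄)) with K = {0_q} × ℝ^{m−q}₋. Let α, β be the strongly active and degenerate index sets, and define the critical cone C(x̄,ȳ) = {d ∈ ℝ^n : J g_α(x̄) d = 0, J g_β(x̄) d ≤ 0}. If ⟨d, G^T d⟩ > 0 for all nonzero d ∈ C(x̄,ȳ), where G is the N×N block matrix with (ν,μ) block ∇²_{x^ν x^μ} l_ν(x̄, ȳ), then x̄ is a local generalized Nash equilibrium. -/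
open Filter Topology
open Set


-- second-order Taylor with Lagrange remainder, for C^2-at-a-point real functions
lemma aux_taylor2 {E : Type*} [NormedAddCommGroup E] [NormedSpace ℝ E] {f : E → ℝ} {x₀ : E}
    (hf : ContDiffAt ℝ 2 f x₀) :
    ∃ r > 0, ContinuousAt (fderiv ℝ (fderiv ℝ f)) x₀ ∧
      ∀ z ∈ Metric.ball x₀ r, ∃ c ∈ Set.Ioo (0:ℝ) 1,
        f z = f x₀ + fderiv ℝ f x₀ (z - x₀) +
          (1/2) * fderiv ℝ (fderiv ℝ f) (x₀ + c • (z - x₀)) (z - x₀) (z - x₀) := by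
  obtain ⟨u, hu, hcu⟩ := hf.contDiffOn (le_refl 2) (by norm_num)
  obtain ⟨u', hsub, hu'o, hx₀u'⟩ := mem_nhds_iff.1 hu
  replace hcu : ContDiffOn ℝ 2 f u' := hcu.mono hsub
  have hdf : ∀ x ∈ u', DifferentiableAt ℝ f x := fun x hx =>
    (hcu.differentiableOn (by norm_num) x hx).differentiableAt (hu'o.mem_nhds hx)
  have hcdf : ContDiffOn ℝ 1 (fderiv ℝ f) u' := hcu.fderiv_of_isOpen hu'o (by norm_num)
  have hdf2 : ∀ x ∈ u', DifferentiableAt ℝ (fderiv ℝ f) x := fun x hx =>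
    (hcdf.differentiableOn (by norm_num) x hx).differentiableAt (hu'o.mem_nhds hx)
  have hcont : ContinuousOn (fderiv ℝ (fderiv ℝ f)) u' :=
    hcdf.continuousOn_fderiv_of_isOpen hu'o (le_refl 1)
  obtain ⟨r, hr0, hball⟩ := Metric.isOpen_iff.1 hu'o x₀ hx₀u'
  refine ⟨r, hr0, hcont.continuousAt (hu'o.mem_nhds hx₀u'), ?_⟩
  intro z hz
  set v := z - x₀ with hv
  by_cases hv0 : v = 0
  · refine ⟨1/2, by norm_num, ?_⟩
    have : z = x₀ := by rwa [← sub_eq_zero]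
    simp [this, ← hv, hv0]
  · have hvnorm : ‖v‖ < r := by
      rw [Metric.mem_ball, dist_eq_norm] at hz; exact hz
    have hseg : ∀ t ∈ Icc (0:ℝ) 1, x₀ + t • v ∈ Metric.ball x₀ r := by
      intro t ht
      rw [Metric.mem_ball, dist_eq_norm, add_sub_cancel_left, norm_smul]
      calc ‖t‖ * ‖v‖ ≤ 1 * ‖v‖ := by
            apply mul_le_mul_of_nonneg_right _ (norm_nonneg v)
            rw [Real.norm_eq_abs, abs_le]; constructor <;> linarith [ht.1, ht.2]
        _ < r := by rwa [one_mul]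
    set M := 2 * (f z - f x₀ - fderiv ℝ f x₀ v) with hM
    set ψ : ℝ → ℝ := fun t => f (x₀ + t • v) - f x₀ - t * (fderiv ℝ f x₀ v) - t^2/2 * M with hψ
    have hlin : ∀ t : ℝ, HasDerivAt (fun s : ℝ => x₀ + s • v) v t := by
      intro t
      simpa using ((hasDerivAt_id t).smul_const v).const_add x₀
    have hψd : ∀ t ∈ Icc (0:ℝ) 1,
        HasDerivAt ψ (fderiv ℝ f (x₀ + t • v) v - fderiv ℝ f x₀ v - t * M) t := by
      intro t ht
      have h2 : HasDerivAt (fun s => f (x₀ + s • v)) (fderiv ℝ f (x₀ + t • v) v) t :=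
        ((hdf _ (hball (hseg t ht))).hasFDerivAt).comp_hasDerivAt t (hlin t)
      have h3 : HasDerivAt (fun s : ℝ => s * (fderiv ℝ f x₀ v)) (fderiv ℝ f x₀ v) t :=
        hasDerivAt_mul_const _
      have h4 : HasDerivAt (fun s : ℝ => s^2/2 * M) (t * M) t := by
        have := (((hasDerivAt_pow 2 t).div_const 2).mul_const M)
        refine this.congr_deriv ?_
        rw [show (2:ℕ) - 1 = 1 from rfl, pow_one]; push_cast; ring
      exact ((h2.sub_const (f x₀)).sub h3).sub h4
    have hψc : ContinuousOn ψ (Icc 0 1) := fun t ht =>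
      ((hψd t ht).continuousAt).continuousWithinAt
    have hψ0 : ψ 0 = 0 := by simp [hψ]
    have hx₀v : x₀ + v = z := by rw [hv]; abel
    have hψ1 : ψ 1 = 0 := by simp [hψ, hM, hx₀v]
    obtain ⟨c₁, hc₁, hdc₁⟩ := exists_deriv_eq_zero (by norm_num : (0:ℝ) < 1) hψc
      (hψ0.trans hψ1.symm)
    have heq1 : fderiv ℝ f (x₀ + c₁ • v) v - fderiv ℝ f x₀ v - c₁ * M = 0 := by
      rw [← (hψd c₁ ⟨hc₁.1.le, hc₁.2.le⟩).deriv]; exact hdc₁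
    set χ : ℝ → ℝ := fun t => fderiv ℝ f (x₀ + t • v) v - fderiv ℝ f x₀ v - t * M with hχ
    have hχd : ∀ t ∈ Icc (0:ℝ) c₁,
        HasDerivAt χ (fderiv ℝ (fderiv ℝ f) (x₀ + t • v) v v - M) t := by
      intro t ht
      have htm : t ∈ Icc (0:ℝ) 1 := ⟨ht.1, ht.2.trans hc₁.2.le⟩
      have hy : x₀ + t • v ∈ Metric.ball x₀ r := hseg t htm
      have h5 : HasFDerivAt (fun y => fderiv ℝ f y v)
          ((fderiv ℝ (fderiv ℝ f) (x₀ + t • v)).flip v) (x₀ + t • v) := by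
        have := ((hdf2 _ (hball hy)).hasFDerivAt).clm_apply (hasFDerivAt_const v (x₀ + t • v))
        simpa using this
      have h6 : HasDerivAt (fun s => fderiv ℝ f (x₀ + s • v) v)
          (fderiv ℝ (fderiv ℝ f) (x₀ + t • v) v v) t := by
        have := h5.comp_hasDerivAt t (hlin t)
        exact this
      have h7 : HasDerivAt (fun s : ℝ => s * M) M t := hasDerivAt_mul_const _
      exact (h6.sub_const (fderiv ℝ f x₀ v)).sub h7
    have hχc : ContinuousOn χ (Icc 0 c₁) := fun t ht =>
      ((hχd t ht).continuousAt).continuousWithinAt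
    have hχ0 : χ 0 = 0 := by simp [hχ]
    obtain ⟨c, hc, hdc⟩ := exists_deriv_eq_zero hc₁.1 hχc (hχ0.trans heq1.symm)
    have heq2 : fderiv ℝ (fderiv ℝ f) (x₀ + c • v) v v - M = 0 := by
      rw [← (hχd c ⟨hc.1.le, hc.2.le⟩).deriv]; exact hdc
    refine ⟨c, ⟨hc.1, hc.2.trans hc₁.2⟩, ?_⟩
    have hMv : M = fderiv ℝ (fderiv ℝ f) (x₀ + c • v) v v := by linarith
    rw [hM] at hMv
    linarith

lemma aux_lim_le {E : Type*} [NormedAddCommGroup E] [NormedSpace ℝ E] {h : E → ℝ} {x₀ : E}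
    (hd : DifferentiableAt ℝ h x₀) {z : ℕ → E} (hz : Tendsto z atTop (𝓝 x₀))
    (hne : ∀ k, z k ≠ x₀) {d : E}
    (hdk : Tendsto (fun k => (‖z k - x₀‖)⁻¹ • (z k - x₀)) atTop (𝓝 d))
    (hle : ∀ k, h (z k) ≤ h x₀) : fderiv ℝ h x₀ d ≤ 0 := by
  set f' := fderiv ℝ h x₀ with hf'
  have ho : (fun z' => h z' - h x₀ - f' (z' - x₀)) =o[𝓝 x₀] fun z' => z' - x₀ :=
    hd.hasFDerivAt.isLittleO
  have ho2 : (fun k => h (z k) - h x₀ - f' (z k - x₀)) =o[atTop] fun k => z k - x₀ :=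
    ho.comp_tendsto hz
  have htpos : ∀ k, 0 < ‖z k - x₀‖ := fun k => by
    rw [norm_pos_iff]; exact sub_ne_zero_of_ne (hne k)
  have hdiv : Tendsto (fun k => ‖h (z k) - h x₀ - f' (z k - x₀)‖ / ‖z k - x₀‖) atTop (𝓝 0) :=
    ho2.norm_norm.tendsto_div_nhds_zero
  have hnum : Tendsto (fun k => (h (z k) - h x₀ - f' (z k - x₀)) / ‖z k - x₀‖) atTop (𝓝 0) := by
    apply squeeze_zero_norm _ hdiv
    intro k
    exact le_of_eq (by rw [Real.norm_eq_abs, abs_div, abs_of_pos (htpos k), Real.norm_eq_abs])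
  have happ : Tendsto (fun k => f' ((‖z k - x₀‖)⁻¹ • (z k - x₀))) atTop (𝓝 (f' d)) :=
    (f'.continuous.tendsto d).comp hdk
  have hkey : Tendsto (fun k => (h (z k) - h x₀) / ‖z k - x₀‖) atTop (𝓝 (f' d)) := by
    have heq : ∀ k, (h (z k) - h x₀) / ‖z k - x₀‖ =
        (h (z k) - h x₀ - f' (z k - x₀)) / ‖z k - x₀‖ + f' ((‖z k - x₀‖)⁻¹ • (z k - x₀)) := by
      intro k
      rw [map_smul, smul_eq_mul]
      field_simp
      ring
    simp_rw [heq]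
    simpa using hnum.add happ
  apply le_of_tendsto hkey
  filter_upwards with k
  exact div_nonpos_of_nonpos_of_nonneg (by linarith [hle k]) (htpos k).le

lemma aux_lim_eq {E : Type*} [NormedAddCommGroup E] [NormedSpace ℝ E] {h : E → ℝ} {x₀ : E}
    (hd : DifferentiableAt ℝ h x₀) {z : ℕ → E} (hz : Tendsto z atTop (𝓝 x₀))
    (hne : ∀ k, z k ≠ x₀) {d : E}
    (hdk : Tendsto (fun k => (‖z k - x₀‖)⁻¹ • (z k - x₀)) atTop (𝓝 d))
    (heq : ∀ k, h (z k) = h x₀) : fderiv ℝ h x₀ d = 0 := by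
  have h1 : fderiv ℝ h x₀ d ≤ 0 := aux_lim_le hd hz hne hdk (fun k => (heq k).le)
  have h2 : fderiv ℝ (fun x => -(h x)) x₀ d ≤ 0 := by
    apply aux_lim_le hd.neg hz hne hdk
    intro k; simp [heq k]
  rw [fderiv_fun_neg] at h2
  simp only [ContinuousLinearMap.neg_apply, neg_nonpos] at h2
  linarith


set_option maxHeartbeats 1600000 in
/-- in the shared-constraint GNEP, if `(x̄,ȳ)` satisfies the consensus KKT
conditions and the full quadratic form `d ↦ ⟨d, Gᵀd⟩` (with `G` the block matrix of
`∇²_{x^ν x^μ} l_ν(x̄,ȳ)`) is positive on the nonzero vectors of the critical cone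
`C(x̄,ȳ)`, then `x̄` is a local generalized Nash equilibrium. -/
theorem stmt15 {N : ℕ} (n : Fin N → ℕ) {m q : ℕ} (hqm : q ≤ m)
    (θ : Fin N → (∀ ν, EuclideanSpace ℝ (Fin (n ν))) → ℝ)
    (g : (∀ ν, EuclideanSpace ℝ (Fin (n ν))) → Fin m → ℝ)
    (xbar : ∀ ν, EuclideanSpace ℝ (Fin (n ν))) (ybar : Fin m → ℝ)
    -- twice continuous differentiability near x̄
    (hθ : ∀ ν, ContDiffAt ℝ 2 (θ ν) xbar)
    (hg : ∀ i, ContDiffAt ℝ 2 (fun x => g x i) xbar)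
    -- consensus KKT: stationarity of each player's Lagrangian with the shared multiplier
    (hstat : ∀ ν, fderiv ℝ
        (fun z => θ ν (Function.update xbar ν z) +
          ∑ i, ybar i * g (Function.update xbar ν z) i) (xbar ν) = 0)
    -- consensus KKT: ȳ ∈ N_K(g(x̄)) with K = {0_q} × ℝ^{m-q}₋
    (hfeasEq : ∀ i : Fin m, (i : ℕ) < q → g xbar i = 0)
    (hfeasIneq : ∀ i : Fin m, q ≤ (i : ℕ) → g xbar i ≤ 0)
    (hsign : ∀ i : Fin m, q ≤ (i : ℕ) → 0 ≤ ybar i)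
    (hcomp : ∀ i : Fin m, q ≤ (i : ℕ) → ybar i * g xbar i = 0)
    -- second-order condition: `⟨d, Gᵀ d⟩ > 0` for nonzero `d` in the critical cone
    (hSOC : ∀ d : (∀ ν, EuclideanSpace ℝ (Fin (n ν))), d ≠ 0 →
      (∀ i : Fin m, ((i : ℕ) < q ∨ (g xbar i = 0 ∧ 0 < ybar i)) →
        fderiv ℝ (fun x => g x i) xbar d = 0) →
      (∀ i : Fin m, (q ≤ (i : ℕ) ∧ g xbar i = 0 ∧ ybar i = 0) →
        fderiv ℝ (fun x => g x i) xbar d ≤ 0) →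
      0 < ∑ ν, fderiv ℝ (fun x => fderiv ℝ
            (fun x' => θ ν x' + ∑ i, ybar i * g x' i) x (Pi.single ν (d ν))) xbar d) :
    -- conclusion: x̄ is a local generalized Nash equilibrium
    ∀ ν, ∃ U ∈ 𝓝 (xbar ν), ∀ z ∈ U,
      (∀ i : Fin m, (i : ℕ) < q → g (Function.update xbar ν z) i = 0) →
      (∀ i : Fin m, q ≤ (i : ℕ) → g (Function.update xbar ν z) i ≤ 0) →
      θ ν xbar ≤ θ ν (Function.update xbar ν z) := by
  intro ν
  classical
  set E := EuclideanSpace ℝ (Fin (n ν)) with hE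
  set x₀ : E := xbar ν with hx₀
  set A : E → (∀ μ, EuclideanSpace ℝ (Fin (n μ))) := Function.update xbar ν with hA
  set J : E →L[ℝ] (∀ μ, EuclideanSpace ℝ (Fin (n μ))) :=
    ContinuousLinearMap.pi (Pi.single ν (ContinuousLinearMap.id ℝ E)) with hJ
  have hAx₀ : A x₀ = xbar := Function.update_eq_self ν xbar
  have hAderiv : ∀ z : E, HasFDerivAt A J z := fun z => hasFDerivAt_update xbar z
  have hAcont : Continuous A := (contDiff_update (𝕜 := ℝ) 2 xbar ν).continuous
  have hJapp : ∀ w : E, J w = Pi.single ν w := by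
    intro w
    ext μ
    by_cases hμ : μ = ν
    · subst hμ; simp [hJ]
    · simp [hJ, Pi.single_eq_of_ne hμ]
  -- the Lagrangian and its composition with A
  set L : (∀ μ, EuclideanSpace ℝ (Fin (n μ))) → ℝ :=
    fun x => θ ν x + ∑ i, ybar i * g x i with hL
  have hLC : ContDiffAt ℝ 2 L xbar :=
    (hθ ν).add (ContDiffAt.sum fun i _ => (contDiffAt_const (c := ybar i)).mul (hg i))
  set F : E → ℝ := fun z => L (A z) with hF
  have hFC : ContDiffAt ℝ 2 F x₀ := by
    have hLC' : ContDiffAt ℝ 2 L (A x₀) := by rw [hAx₀]; exact hLC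
    exact hLC'.comp x₀ (contDiff_update (𝕜 := ℝ) 2 xbar ν).contDiffAt
  have hFstat : fderiv ℝ F x₀ = 0 := hstat ν
  -- chain rule helper
  have hchain : ∀ (h : (∀ μ, EuclideanSpace ℝ (Fin (n μ))) → ℝ), DifferentiableAt ℝ h xbar →
      fderiv ℝ (fun z => h (A z)) x₀ = (fderiv ℝ h xbar).comp J := by
    intro h hh
    have h1 : HasFDerivAt h (fderiv ℝ h xbar) (A x₀) := by rw [hAx₀]; exact hh.hasFDerivAt
    exact (h1.comp x₀ (hAderiv x₀)).fderiv
  -- differentiability of the pieces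
  have hθdiffb : DifferentiableAt ℝ (θ ν) xbar := (hθ ν).differentiableAt two_ne_zero
  have hgdiffb : ∀ i, DifferentiableAt ℝ (fun x => g x i) xbar :=
    fun i => (hg i).differentiableAt two_ne_zero
  have hΘdiff : DifferentiableAt ℝ (fun z => θ ν (A z)) x₀ := by
    have h1 : DifferentiableAt ℝ (θ ν) (A x₀) := by rw [hAx₀]; exact hθdiffb
    exact h1.comp x₀ (hAderiv x₀).differentiableAt
  have hGdiff : ∀ i, DifferentiableAt ℝ (fun z => g (A z) i) x₀ := by
    intro i
    have h1 : DifferentiableAt ℝ (fun x => g x i) (A x₀) := by rw [hAx₀]; exact hgdiffb i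
    exact h1.comp x₀ (hAderiv x₀).differentiableAt
  -- value identities
  have hsum0 : ∑ i, ybar i * g xbar i = 0 := by
    apply Finset.sum_eq_zero
    intro i _
    by_cases hi : (i : ℕ) < q
    · rw [hfeasEq i hi, mul_zero]
    · exact hcomp i (le_of_not_gt hi)
  have hFx₀ : F x₀ = θ ν xbar := by
    simp only [hF, hL, hAx₀, hsum0, add_zero]
  -- Taylor data
  obtain ⟨r, hr0, hBc, hTay⟩ := aux_taylor2 hFC
  set B := fderiv ℝ (fderiv ℝ F) with hB
  -- by contradiction
  by_contra hcon
  push_neg at hcon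
  have hseq : ∀ k : ℕ, ∃ z : E, z ∈ Metric.ball x₀ (min r ((k : ℝ) + 1)⁻¹) ∧
      (∀ i : Fin m, (i : ℕ) < q → g (Function.update xbar ν z) i = 0) ∧
      (∀ i : Fin m, q ≤ (i : ℕ) → g (Function.update xbar ν z) i ≤ 0) ∧
      θ ν (Function.update xbar ν z) < θ ν xbar := by
    intro k
    obtain ⟨z, hz, h1, h2, h3⟩ := hcon _ (Metric.ball_mem_nhds x₀ (lt_min hr0 (by positivity : (0:ℝ) < ((k : ℝ) + 1)⁻¹)))
    exact ⟨z, hz, h1, h2, h3⟩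
  choose z hzball hfeq hfineq hlt using hseq
  have hzne : ∀ k, z k ≠ x₀ := by
    intro k hk
    have := hlt k
    rw [hk] at this
    rw [show Function.update xbar ν x₀ = xbar from Function.update_eq_self ν xbar] at this
    exact lt_irrefl _ this
  have ht : ∀ k, 0 < ‖z k - x₀‖ := fun k => by
    rw [norm_pos_iff]; exact sub_ne_zero_of_ne (hzne k)
  have hztend : Tendsto z atTop (𝓝 x₀) := by
    have hdist : ∀ k, dist (z k) x₀ < ((k : ℝ) + 1)⁻¹ := fun k =>
      lt_of_lt_of_le (Metric.mem_ball.1 (hzball k)) (min_le_right _ _)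
    have hlim : Tendsto (fun k : ℕ => ((k : ℝ) + 1)⁻¹) atTop (𝓝 0) := by
      simpa [one_div] using tendsto_one_div_add_atTop_nhds_zero_nat (𝕜 := ℝ)
    have := squeeze_zero (fun k => dist_nonneg) (fun k => (hdist k).le) hlim
    exact tendsto_iff_dist_tendsto_zero.2 this
  set dseq : ℕ → E := fun k => (‖z k - x₀‖)⁻¹ • (z k - x₀) with hdseq
  have hdsphere : ∀ k, dseq k ∈ Metric.sphere (0 : E) 1 := by
    intro k
    rw [mem_sphere_zero_iff_norm, norm_smul, Real.norm_eq_abs, abs_of_pos (inv_pos.2 (ht k)),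
      inv_mul_cancel₀ (ne_of_gt (ht k))]
  obtain ⟨d, hdmem, φ, hφmono, hdtend⟩ := (isCompact_sphere (0 : E) 1).tendsto_subseq hdsphere
  have hdnorm : ‖d‖ = 1 := mem_sphere_zero_iff_norm.1 hdmem
  have hdne : d ≠ 0 := fun h => by rw [h, norm_zero] at hdnorm; norm_num at hdnorm
  have hzφtend : Tendsto (z ∘ φ) atTop (𝓝 x₀) := hztend.comp hφmono.tendsto_atTop
  have hzφne : ∀ k, (z ∘ φ) k ≠ x₀ := fun k => hzne (φ k)
  have hdφtend : Tendsto (fun k => (‖(z ∘ φ) k - x₀‖)⁻¹ • ((z ∘ φ) k - x₀)) atTop (𝓝 d) := hdtend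
  -- critical cone conditions in terms of the player's variable
  have cone1 : ∀ i : Fin m, (i : ℕ) < q → fderiv ℝ (fun z' => g (A z') i) x₀ d = 0 := by
    intro i hi
    apply aux_lim_eq (hGdiff i) hzφtend hzφne hdφtend
    intro k
    show g (A (z (φ k))) i = g (A x₀) i
    rw [hAx₀, hA, hfeasEq i hi]
    exact hfeq (φ k) i hi
  have cone2 : ∀ i : Fin m, q ≤ (i : ℕ) → g xbar i = 0 →
      fderiv ℝ (fun z' => g (A z') i) x₀ d ≤ 0 := by
    intro i hi hgi
    apply aux_lim_le (hGdiff i) hzφtend hzφne hdφtend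
    intro k
    show g (A (z (φ k))) i ≤ g (A x₀) i
    rw [hAx₀, hA, hgi]
    exact hfineq (φ k) i hi
  have hΘle : fderiv ℝ (fun z' => θ ν (A z')) x₀ d ≤ 0 := by
    apply aux_lim_le hΘdiff hzφtend hzφne hdφtend
    intro k
    show θ ν (A (z (φ k))) ≤ θ ν (A x₀)
    rw [hAx₀, hA]
    exact (hlt (φ k)).le
  -- apply stationarity at d
  have hFd : HasFDerivAt F (fderiv ℝ (fun z' => θ ν (A z')) x₀ +
      ∑ i, ybar i • fderiv ℝ (fun z' => g (A z') i) x₀) x₀ := by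
    exact hΘdiff.hasFDerivAt.add
      (HasFDerivAt.fun_sum fun i _ => ((hGdiff i).hasFDerivAt.const_mul (ybar i)))
  have hTsum : (fderiv ℝ (fun z' => θ ν (A z')) x₀ +
      ∑ i, ybar i • fderiv ℝ (fun z' => g (A z') i) x₀) = 0 := by
    rw [← hFd.fderiv]; exact hFstat
  have h0 : fderiv ℝ (fun z' => θ ν (A z')) x₀ d +
      ∑ i, ybar i * fderiv ℝ (fun z' => g (A z') i) x₀ d = 0 := by
    have := congrArg (fun T : E →L[ℝ] ℝ => T d) hTsum
    simpa [ContinuousLinearMap.add_apply, ContinuousLinearMap.coe_sum', Finset.sum_apply,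
      ContinuousLinearMap.coe_smul', Pi.smul_apply, smul_eq_mul] using this
  set S : Fin m → ℝ := fun i => ybar i * fderiv ℝ (fun z' => g (A z') i) x₀ d with hSdef
  have hSnonpos : ∀ i ∈ Finset.univ, S i ≤ (0:ℝ) := by
    intro i _
    by_cases hi : (i : ℕ) < q
    · rw [hSdef]; simp only; rw [cone1 i hi, mul_zero]
    · have hq : q ≤ (i : ℕ) := le_of_not_gt hi
      by_cases hgi : g xbar i = 0
      · exact mul_nonpos_of_nonneg_of_nonpos (hsign i hq) (cone2 i hq hgi)
      · have : ybar i = 0 := (mul_eq_zero.1 (hcomp i hq)).resolve_right hgi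
        rw [hSdef]; simp only; rw [this, zero_mul]
  have hSsum0 : ∑ i, S i = 0 := by
    refine le_antisymm (Finset.sum_nonpos hSnonpos) ?_
    have : ∑ i, S i = -(fderiv ℝ (fun z' => θ ν (A z')) x₀ d) := by
      rw [hSdef]; linarith [h0]
    rw [this]
    linarith [hΘle]
  have hS0 : ∀ i, S i = 0 := fun i =>
    (Finset.sum_eq_zero_iff_of_nonpos hSnonpos).1 hSsum0 i (Finset.mem_univ i)
  -- translate to derivatives at xbar
  have hGfd : ∀ i, fderiv ℝ (fun x => g x i) xbar (Pi.single ν d) =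
      fderiv ℝ (fun z' => g (A z') i) x₀ d := by
    intro i
    rw [hchain (fun x => g x i) (hgdiffb i), ContinuousLinearMap.comp_apply, hJapp]
  set D : ∀ μ, EuclideanSpace ℝ (Fin (n μ)) := Pi.single ν d with hD
  have hDne : D ≠ 0 := by
    intro hzero
    apply hdne
    have := congrFun hzero ν
    rwa [hD, Pi.single_eq_same] at this
  have hc1 : ∀ i : Fin m, ((i : ℕ) < q ∨ (g xbar i = 0 ∧ 0 < ybar i)) →
      fderiv ℝ (fun x => g x i) xbar D = 0 := by
    intro i hi
    rw [hD, hGfd i]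
    rcases hi with hi | ⟨hgi, hyi⟩
    · exact cone1 i hi
    · by_cases hiq : (i : ℕ) < q
      · exact cone1 i hiq
      · have := hS0 i
        rw [hSdef] at this
        simp only at this
        exact (mul_eq_zero.1 this).resolve_left (ne_of_gt hyi)
  have hc2 : ∀ i : Fin m, (q ≤ (i : ℕ) ∧ g xbar i = 0 ∧ ybar i = 0) →
      fderiv ℝ (fun x => g x i) xbar D ≤ 0 := by
    intro i ⟨hq, hgi, _⟩
    rw [hD, hGfd i]
    exact cone2 i hq hgi
  have hpos := hSOC D hDne hc1 hc2
  -- reduce the sum to the single ν-term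
  rw [Fintype.sum_eq_single ν (by
    intro μ hμ
    have hDμ : D μ = 0 := by rw [hD]; simp [Pi.single_eq_of_ne hμ]
    have h1 : (fun x => fderiv ℝ (fun x' => θ μ x' + ∑ i, ybar i * g x' i) x
        (Pi.single μ (D μ))) = fun _ => (0 : ℝ) := by
      funext x
      rw [hDμ, Pi.single_zero, ContinuousLinearMap.map_zero]
    rw [h1, fderiv_const_apply]
    simp)] at hpos
  rw [show D ν = d by rw [hD]; simp] at hpos
  -- hpos : 0 < fderiv (fun x => fderiv L x (Pi.single ν d)) xbar D ; identify with B x₀ d d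
  set w : ∀ μ, EuclideanSpace ℝ (Fin (n μ)) := Pi.single ν d with hw
  have hJd : J d = w := by rw [hw]; exact hJapp d
  have hLd1 : DifferentiableAt ℝ (fderiv ℝ L) xbar :=
    (hLC.fderiv_right (by norm_num)).differentiableAt one_ne_zero
  have hφw : DifferentiableAt ℝ (fun x => fderiv ℝ L x w) xbar :=
    hLd1.clm_apply (differentiableAt_const w)
  have hFd1 : DifferentiableAt ℝ (fderiv ℝ F) x₀ :=
    (hFC.fderiv_right (by norm_num)).differentiableAt one_ne_zero
  obtain ⟨s, hs, hLs⟩ := hLC.contDiffOn (le_refl 2) (by norm_num)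
  obtain ⟨s', hs'sub, hs'o, hxs'⟩ := mem_nhds_iff.1 hs
  have hLdiff_on : ∀ x ∈ s', DifferentiableAt ℝ L x := fun x hx =>
    (((hLs.mono hs'sub).differentiableOn (by norm_num)) x hx).differentiableAt
      (hs'o.mem_nhds hx)
  have hpre : A ⁻¹' s' ∈ 𝓝 x₀ := by
    apply hAcont.continuousAt.preimage_mem_nhds
    rw [hAx₀]; exact hs'o.mem_nhds hxs'
  have hev : (fun z' => fderiv ℝ F z' d) =ᶠ[𝓝 x₀] (fun z' => fderiv ℝ L (A z') w) := by
    filter_upwards [hpre] with z' hz'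
    have h1 : HasFDerivAt F ((fderiv ℝ L (A z')).comp J) z' :=
      ((hLdiff_on _ hz').hasFDerivAt).comp z' (hAderiv z')
    rw [h1.fderiv, ContinuousLinearMap.comp_apply, hJd]
  have hlhs : fderiv ℝ (fun z' => fderiv ℝ F z' d) x₀ d = B x₀ d d := by
    rw [fderiv_clm_apply hFd1 (differentiableAt_const d)]
    simp [hB]
  have hrhs : fderiv ℝ (fun z' => fderiv ℝ L (A z') w) x₀ d =
      fderiv ℝ (fun x => fderiv ℝ L x w) xbar w := by
    rw [hchain (fun x => fderiv ℝ L x w) hφw, ContinuousLinearMap.comp_apply, hJd]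
  have hkey : fderiv ℝ (fun x => fderiv ℝ L x w) xbar w = B x₀ d d := by
    rw [← hrhs, ← hev.fderiv_eq]
    exact hlhs
  rw [show D = w from hD.trans hw.symm] at hpos
  rw [hkey] at hpos
  -- Taylor expansion along the sequence gives B x₀ d d ≤ 0
  have hzr : ∀ k, z k ∈ Metric.ball x₀ r := fun k =>
    Metric.ball_subset_ball (min_le_left _ _) (hzball k)
  choose c hcIoo hTk using fun k => hTay (z k) (hzr k)
  have hFval : ∀ k, F (z k) < F x₀ := by
    intro k
    rw [hFx₀]
    have hsumle : ∑ i, ybar i * g (A (z k)) i ≤ 0 := by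
      apply Finset.sum_nonpos
      intro i _
      by_cases hi : (i : ℕ) < q
      · rw [hA, hfeq k i hi, mul_zero]
      · exact mul_nonpos_of_nonneg_of_nonpos (hsign i (le_of_not_gt hi))
          (by rw [hA]; exact hfineq k i (le_of_not_gt hi))
    have : F (z k) ≤ θ ν (A (z k)) := by
      rw [hF, hL]
      simp only
      linarith [hsumle]
    calc F (z k) ≤ θ ν (A (z k)) := this
      _ < θ ν xbar := by rw [hA]; exact hlt k
  have hBneg : ∀ k, B (x₀ + c k • (z k - x₀)) (dseq k) (dseq k) < 0 := by
    intro k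
    have hT := hTk k
    rw [hFstat] at hT
    simp only [ContinuousLinearMap.zero_apply, add_zero] at hT
    have hBv : B (x₀ + c k • (z k - x₀)) (z k - x₀) (z k - x₀) < 0 := by
      have := hFval k
      rw [hT] at this
      rw [hB]
      linarith
    have hvd : z k - x₀ = ‖z k - x₀‖ • dseq k := by
      rw [hdseq]
      simp only
      rw [smul_inv_smul₀ (ne_of_gt (ht k))]
    have hexp : ∀ ξ : E, B ξ (z k - x₀) (z k - x₀) =
        (‖z k - x₀‖ * ‖z k - x₀‖) * B ξ (dseq k) (dseq k) := by
      intro ξ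
      conv_lhs => rw [hvd]
      simp only [map_smul, ContinuousLinearMap.smul_apply, smul_eq_mul]
      ring
    rw [hexp] at hBv
    nlinarith [mul_pos (ht k) (ht k)]
  -- pass to the limit along the subsequence
  have hξ0 : Tendsto (fun k => c (φ k) • (z (φ k) - x₀)) atTop (𝓝 (0 : E)) := by
    apply squeeze_zero_norm (f := fun k => c (φ k) • (z (φ k) - x₀))
      (a := fun k => dist (z (φ k)) x₀)
    · intro k
      rw [norm_smul, Real.norm_eq_abs, abs_of_pos (hcIoo (φ k)).1, dist_eq_norm]
      calc c (φ k) * ‖z (φ k) - x₀‖ ≤ 1 * ‖z (φ k) - x₀‖ :=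
          mul_le_mul_of_nonneg_right (hcIoo (φ k)).2.le (norm_nonneg _)
        _ = ‖z (φ k) - x₀‖ := one_mul _
    · have : Tendsto (fun k => dist (z k) x₀) atTop (𝓝 0) :=
        (tendsto_iff_dist_tendsto_zero.1 hztend)
      exact this.comp hφmono.tendsto_atTop
  have hξtend : Tendsto (fun k => x₀ + c (φ k) • (z (φ k) - x₀)) atTop (𝓝 x₀) := by
    simpa using hξ0.const_add x₀
  have hBtend : Tendsto (fun k => B (x₀ + c (φ k) • (z (φ k) - x₀)) (dseq (φ k)) (dseq (φ k)))
      atTop (𝓝 (B x₀ d d)) := by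
    have h1 : Tendsto (fun k => B (x₀ + c (φ k) • (z (φ k) - x₀))) atTop (𝓝 (B x₀)) :=
      (hBc.tendsto).comp hξtend
    have h2 : Tendsto (fun k => B (x₀ + c (φ k) • (z (φ k) - x₀)) (dseq (φ k))) atTop
        (𝓝 (B x₀ d)) := by
      have := (isBoundedBilinearMap_apply.continuous.tendsto (B x₀, d)).comp
        (h1.prodMk_nhds hdtend)
      exact this
    have := (isBoundedBilinearMap_apply.continuous.tendsto (B x₀ d, d)).comp
      (h2.prodMk_nhds hdtend)
    exact this
  have hfinal : B x₀ d d ≤ 0 := le_of_tendsto hBtend (by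
    filter_upwards with k
    exact (hBneg (φ k)).le)
  linarith
end
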